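/- Let ℓ : ℝ → ℝ be differentiable with ℓ'(z) > 0 for all z ∈ ℝ. Suppose (x_i, y_i), i=1,...,n, with y_i ∈ {-1,1}, are linearly separable: there exists w ∈ ℝ^d with y_i ⟨w, x_i⟩ > 0 for all i. Let σ : ℝ → ℝ be differentiable with σ'(z) > 0 for all z. Then for every choice of parameters (a₀, a_1, ..., a_M, w_1, ..., w_M) and every function g : ℝ^d → ℝ, the empirical loss L(θ) = (1/n)∑_i ℓ(-y_i (a₀ + ∑_j a_j σ(⟨w_j, x_i⟩) + g(x_i))) has no critical point in the weights: there is no θ such that ∑_i ℓ'(-y_i f(x_i;θ)) y_i σ'(⟨w_1, x_i⟩) x_i = 0. -/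
import Mathlib


/-- For a loss with strictly positive derivative on linearly separable data, the
empirical loss has no critical point in the hidden weights: the gradient condition
with respect to any hidden weight vector never holds. -/
theorem no_critical_point_positive_derivative_loss
    (d n M : ℕ) (hn : 0 < n)
    (x : Fin n → Fin d → ℝ) (y : Fin n → ℝ) (hy : ∀ i, y i = 1 ∨ y i = -1)
    (ℓ : ℝ → ℝ) (hℓd : Differentiable ℝ ℓ) (hℓ' : ∀ z : ℝ, 0 < deriv ℓ z)
    (σ : ℝ → ℝ) (hσd : Differentiable ℝ σ) (hσ' : ∀ z : ℝ, 0 < deriv σ z)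
    (w : Fin d → ℝ) (hsep : ∀ i, 0 < y i * ∑ k, w k * x i k)
    (a0 : ℝ) (a : Fin M → ℝ) (wj : Fin M → Fin d → ℝ)
    (g : (Fin d → ℝ) → ℝ) (j : Fin M) :
    ∑ i, (deriv ℓ (-(y i) * (a0 + (∑ j', a j' * σ (∑ k, wj j' k * x i k)) + g (x i)))
        * y i * deriv σ (∑ k, wj j k * x i k)) • x i ≠ (0 : Fin d → ℝ) := by
  intro h
  set c : Fin n → ℝ := fun i =>
    deriv ℓ (-(y i) * (a0 + (∑ j', a j' * σ (∑ k, wj j' k * x i k)) + g (x i)))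
      * y i * deriv σ (∑ k, wj j k * x i k) with hc
  have hzero : ∑ i, c i * ∑ k, w k * x i k = 0 := by
    have h0 : ∀ k, ∑ i, c i * x i k = 0 := by
      intro k
      have := congrFun h k
      simpa [hc, neg_mul] using this
    calc ∑ i, c i * ∑ k, w k * x i k
        = ∑ k, w k * ∑ i, c i * x i k := by
          simp_rw [Finset.mul_sum]
          rw [Finset.sum_comm]
          exact Finset.sum_congr rfl fun k _ => Finset.sum_congr rfl fun i _ => by ring
      _ = 0 := by simp [h0]
  have hpos : ∀ i, 0 < c i * ∑ k, w k * x i k := by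
    intro i
    have h1 := hℓ' (-(y i) * (a0 + (∑ j', a j' * σ (∑ k, wj j' k * x i k)) + g (x i)))
    have h2 := hσ' (∑ k, wj j k * x i k)
    have h3 := hsep i
    have : c i * ∑ k, w k * x i k =
        deriv ℓ (-(y i) * (a0 + (∑ j', a j' * σ (∑ k, wj j' k * x i k)) + g (x i)))
          * deriv σ (∑ k, wj j k * x i k) * (y i * ∑ k, w k * x i k) := by
      rw [hc]; ring
    rw [this]
    positivity
  have : 0 < ∑ i, c i * ∑ k, w k * x i k :=
    Finset.sum_pos (fun i _ => hpos i) (by simpa using Finset.univ_nonempty_iff.mpr ⟨⟨0, hn⟩⟩)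
  linarith
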